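/- Let Ω ⊆ ℂⁿ be open, let φ : Ω → ℝ be a C² plurisubharmonic function, and let f ∈ C_c^∞(Ω). Then Σ_{l=1}^{2n} ∫_Ω |∂_l f|² e^{−φ} dλ ≤ Σ_{l=1}^{2n} ∫_Ω |∂_l f − (∂_l φ) f|² e^{−φ} dλ; consequently ‖f‖²_φ + Σ_{l=1}^{2n} ‖∂_l f‖²_φ ≤ ‖f‖²_φ + Σ_{l=1}^{2n} ‖∂_l f − (∂_l φ) f‖²_φ. -/

import Mathlib

open MeasureTheory Complex Metric Filter
noncomputable section

/-- `ℂⁿ` with its Euclidean inner product and norm. -/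
abbrev Cn (n : ℕ) := EuclideanSpace ℂ (Fin n)

instance {n : ℕ} : MeasurableSpace (Cn n) := MeasurableSpace.comap WithLp.ofLp MeasurableSpace.pi

/-- Lebesgue measure on `ℂⁿ ≅ ℝ^{2n}`. -/
instance {n : ℕ} : MeasureSpace (Cn n) := ⟨MeasureTheory.Measure.map (WithLp.toLp 2) (MeasureTheory.Measure.pi fun _ => volume)⟩

/-- The real coordinate direction indexed by `(j, b)`: the `x_j`-direction if `b = false`,
the `y_j`-direction if `b = true`. -/
def dir {n : ℕ} (l : Fin n × Bool) : Cn n :=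
  EuclideanSpace.single l.1 (if l.2 then Complex.I else 1)

/-- The real partial derivative `∂_l`, `l` ranging over the `2n` real coordinate
directions of `ℂⁿ`. -/
def pd {n : ℕ} {F : Type} [NormedAddCommGroup F] [NormedSpace ℝ F]
    (l : Fin n × Bool) (f : Cn n → F) (z : Cn n) : F :=
  fderiv ℝ f z (dir l)

/-- The real Laplacian `Δφ = Σ_l ∂_l ∂_l φ`. -/
def lap {n : ℕ} (φ : Cn n → ℝ) (z : Cn n) : ℝ :=
  ∑ l : Fin n × Bool, pd l (pd l φ) z

/-- `|∇φ|²`, the squared norm of the real gradient. -/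
def gradSq {n : ℕ} (φ : Cn n → ℝ) (z : Cn n) : ℝ :=
  ∑ l : Fin n × Bool, (pd l φ z)^2

/-- The Levi form `L_u(z;t) = ¼(D²u(z)(t,t) + D²u(z)(it,it))`. -/
def levi {n : ℕ} (u : Cn n → ℝ) (z t : Cn n) : ℝ :=
  (1/4) * (fderiv ℝ (fun w => fderiv ℝ u w t) z t
    + fderiv ℝ (fun w => fderiv ℝ u w (Complex.I • t)) z (Complex.I • t))

/-- The Wirtinger derivative `∂g/∂z_j = ½(∂g/∂x_j − i ∂g/∂y_j)` of a complex-valued function. -/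
def wz {n : ℕ} (j : Fin n) (g : Cn n → ℂ) (z : Cn n) : ℂ :=
  (1/2) * (pd (j, false) g z - Complex.I * pd (j, true) g z)

/-- The Wirtinger derivative `∂g/∂z̄_j = ½(∂g/∂x_j + i ∂g/∂y_j)` of a complex-valued function. -/
def wzbar {n : ℕ} (j : Fin n) (g : Cn n → ℂ) (z : Cn n) : ℂ :=
  (1/2) * (pd (j, false) g z + Complex.I * pd (j, true) g z)

/-- The Wirtinger derivative `∂φ/∂z_j` of a real-valued function. -/
def wzR {n : ℕ} (j : Fin n) (φ : Cn n → ℝ) (z : Cn n) : ℂ :=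
  (1/2) * (Complex.ofReal (pd (j, false) φ z) - Complex.I * Complex.ofReal (pd (j, true) φ z))

/-- The Wirtinger derivative `∂φ/∂z̄_j` of a real-valued function. -/
def wzbarR {n : ℕ} (j : Fin n) (φ : Cn n → ℝ) (z : Cn n) : ℂ :=
  (1/2) * (Complex.ofReal (pd (j, false) φ z) + Complex.I * Complex.ofReal (pd (j, true) φ z))

/-- The complex Hessian coefficient `∂²φ/∂z_j∂z̄_k`. -/
def hess {n : ℕ} (φ : Cn n → ℝ) (j k : Fin n) (z : Cn n) : ℂ :=
  wz j (fun w => wzbarR k φ w) z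

/-- `∂̄*_φ f = −Σ_j (∂f_j/∂z_j − (∂φ/∂z_j) f_j)` for a `(0,1)`-form `f = (f_1,…,f_n)`. -/
def dbarStar {n : ℕ} (φ : Cn n → ℝ) (f : Fin n → Cn n → ℂ) (z : Cn n) : ℂ :=
  -∑ j, (wz j (f j) z - wzR j φ z * f j z)

/-- `f ∈ C_c^∞(Ω)`: smooth, compactly supported, with support inside `Ω`. -/
def SmoothCompSupp {n : ℕ} (Ω : Set (Cn n)) (f : Cn n → ℂ) : Prop :=
  ContDiff ℝ (⊤ : ℕ∞) f ∧ HasCompactSupport f ∧ tsupport f ⊆ Ω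


/-! ### Auxiliary material for the proof -/

open scoped Manifold

namespace Stmt1Aux

instance {n : ℕ} : BorelSpace (Cn n) := inferInstanceAs (BorelSpace (PiLp 2 (fun _ : Fin n => ℂ)))

instance {n : ℕ} : (volume : Measure (Cn n)).IsAddHaarMeasure :=
  (PiLp.continuousLinearEquiv 2 ℝ (fun _ : Fin n => ℂ)).symm.isAddHaarMeasure_map
    (Measure.pi fun _ => volume)

variable {n : ℕ}

lemma pd_congr {F : Type} [NormedAddCommGroup F] [NormedSpace ℝ F]
    (l : Fin n × Bool) {f g : Cn n → F} {z : Cn n} (h : f =ᶠ[nhds z] g) :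
    pd l f z = pd l g z := by
  unfold pd; rw [h.fderiv_eq]

lemma pd_zero_of_nmem {F : Type} [NormedAddCommGroup F] [NormedSpace ℝ F]
    (l : Fin n × Bool) {f : Cn n → F} {z : Cn n} (h : z ∉ tsupport f) : pd l f z = 0 := by
  unfold pd
  rw [Function.notMem_support.mp (fun hs => h (support_fderiv_subset ℝ hs))]
  rfl

lemma contDiff_pd_top {F : Type} [NormedAddCommGroup F] [NormedSpace ℝ F]
    (l : Fin n × Bool) {f : Cn n → F} (hf : ContDiff ℝ (⊤ : ℕ∞) f) :
    ContDiff ℝ (⊤ : ℕ∞) (pd l f) :=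
  (hf.fderiv_right (le_refl _)).clm_apply contDiff_const

lemma contDiff_pd_one (l : Fin n × Bool) {Φ : Cn n → ℝ} (hΦ : ContDiff ℝ 2 Φ) :
    ContDiff ℝ 1 (pd l Φ) :=
  (hΦ.fderiv_right (by norm_num)).clm_apply contDiff_const

lemma continuous_pd_pd (l : Fin n × Bool) {Φ : Cn n → ℝ} (hΦ : ContDiff ℝ 2 Φ) :
    Continuous (pd l (pd l Φ)) :=
  (((contDiff_pd_one l hΦ).fderiv_right (m := 0) (by norm_num)).clm_apply
    contDiff_const).continuous

lemma normSq_eq (f : Cn n → ℂ) :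
    (fun z => ‖f z‖^2) = fun z => (f z).re * (f z).re + (f z).im * (f z).im := by
  funext z
  rw [Complex.sq_norm, Complex.normSq_apply]

lemma contDiff_normSq {f : Cn n → ℂ} (hf : ContDiff ℝ (⊤ : ℕ∞) f) :
    ContDiff ℝ (⊤ : ℕ∞) (fun z => ‖f z‖^2) := by
  rw [normSq_eq]
  exact ((Complex.reCLM.contDiff.comp hf).mul (Complex.reCLM.contDiff.comp hf)).add
    ((Complex.imCLM.contDiff.comp hf).mul (Complex.imCLM.contDiff.comp hf))

lemma pd_normSq (l : Fin n × Bool) {f : Cn n → ℂ} (hf : ContDiff ℝ (⊤ : ℕ∞) f) (z : Cn n) :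
    pd l (fun w => ‖f w‖^2) z = 2 * ((starRingEnd ℂ (f z)) * pd l f z).re := by
  have hfz : HasFDerivAt f (fderiv ℝ f z) z := (hf.differentiable (by norm_num) z).hasFDerivAt
  have h1 : HasFDerivAt (fun w => (f w).re) (Complex.reCLM.comp (fderiv ℝ f z)) z :=
    Complex.reCLM.hasFDerivAt.comp z hfz
  have h2 : HasFDerivAt (fun w => (f w).im) (Complex.imCLM.comp (fderiv ℝ f z)) z :=
    Complex.imCLM.hasFDerivAt.comp z hfz
  have hu : HasFDerivAt (fun w => ‖f w‖^2)
      (((f z).re • (Complex.reCLM.comp (fderiv ℝ f z))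
          + (f z).re • (Complex.reCLM.comp (fderiv ℝ f z)))
        + ((f z).im • (Complex.imCLM.comp (fderiv ℝ f z))
          + (f z).im • (Complex.imCLM.comp (fderiv ℝ f z)))) z := by
    rw [normSq_eq]
    exact (h1.mul h1).add (h2.mul h2)
  unfold pd
  rw [hu.fderiv]
  simp [Complex.mul_re, pd]
  ring

lemma hasFDerivAt_exp_neg {Φ : Cn n → ℝ} (hΦ : ContDiff ℝ 2 Φ) (z : Cn n) :
    HasFDerivAt (fun w => Real.exp (-Φ w)) (Real.exp (-Φ z) • (-(fderiv ℝ Φ z))) z := by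
  have h := (Real.hasDerivAt_exp (-Φ z)).comp_hasFDerivAt z
    ((hΦ.differentiable (by norm_num) z).hasFDerivAt).neg
  exact h

lemma ptwise_aux (a c : ℂ) (r e m : ℝ) (hm : m = 2 * ((starRingEnd ℂ c) * a).re) :
    ‖a - (r : ℂ) * c‖^2 * e = ‖a‖^2 * e + ((r^2 * ‖c‖^2 * e) - m * (r * e)) := by
  subst hm
  simp only [Complex.sq_norm, Complex.normSq_apply, Complex.sub_re,
    Complex.sub_im, Complex.mul_re, Complex.mul_im, Complex.conj_re, Complex.conj_im,
    Complex.ofReal_re, Complex.ofReal_im]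
  ring

lemma lap_nonneg_of_levi {φ : Cn n → ℝ} {z : Cn n} (h : ∀ t, 0 ≤ levi φ z t) :
    0 ≤ lap φ z := by
  have key : ∀ j : Fin n, (∑ b : Bool, pd (j, b) (pd (j, b) φ) z)
      = 4 * levi φ z (dir (j, false)) := by
    intro j
    have hI : (Complex.I • dir (j, false) : Cn n) = dir (j, true) := by
      unfold dir; ext k; simp [EuclideanSpace.single_apply]
    rw [Fintype.sum_bool]
    unfold levi pd
    rw [hI]
    ring
  unfold lap
  rw [Fintype.sum_prod_type]
  rw [Finset.sum_congr rfl (fun j _ => key j)]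
  exact Finset.sum_nonneg fun j _ => mul_nonneg (by norm_num) (h _)

/-- The key inequality for a globally C² weight. -/
lemma key {n : ℕ} (Φ : Cn n → ℝ) (hΦ : ContDiff ℝ 2 Φ)
    (f : Cn n → ℂ) (hf : ContDiff ℝ (⊤ : ℕ∞) f) (hsupp : HasCompactSupport f)
    (hlap : ∀ z, 0 ≤ ‖f z‖^2 * lap Φ z) :
    (∑ l : Fin n × Bool, ∫ z, ‖pd l f z‖^2 * Real.exp (-Φ z))
      ≤ ∑ l : Fin n × Bool,
          ∫ z, ‖pd l f z - Complex.ofReal (pd l Φ z) * f z‖^2 * Real.exp (-Φ z) := by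
  -- notation
  have hE_cont : Continuous fun z => Real.exp (-Φ z) :=
    Real.continuous_exp.comp hΦ.continuous.neg
  have hE_diff : Differentiable ℝ fun z => Real.exp (-Φ z) :=
    fun z => (hasFDerivAt_exp_neg hΦ z).differentiableAt
  have hu_cont : Continuous fun z => ‖f z‖^2 := (contDiff_normSq hf).continuous
  have hu_diff : Differentiable ℝ fun z => ‖f z‖^2 :=
    (contDiff_normSq hf).differentiable (by norm_num)
  have hpdf_cont : ∀ l : Fin n × Bool, Continuous (pd l f) :=
    fun l => (contDiff_pd_top l hf).continuous
  have hpdu_cont : ∀ l : Fin n × Bool, Continuous (pd l fun w => ‖f w‖^2) :=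
    fun l => (contDiff_pd_top l (contDiff_normSq hf)).continuous
  have hp_cont : ∀ l : Fin n × Bool, Continuous (pd l Φ) :=
    fun l => (contDiff_pd_one l hΦ).continuous
  have hp_diff : ∀ l : Fin n × Bool, Differentiable ℝ (pd l Φ) :=
    fun l => (contDiff_pd_one l hΦ).differentiable (by norm_num)
  have hpp_cont : ∀ l : Fin n × Bool, Continuous (pd l (pd l Φ)) :=
    fun l => continuous_pd_pd l hΦ
  -- g l := pd l Φ * exp (-Φ)
  have hg_diff : ∀ l : Fin n × Bool,
      Differentiable ℝ (fun w => pd l Φ w * Real.exp (-Φ w)) :=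
    fun l => (hp_diff l).mul hE_diff
  have hg_cont : ∀ l : Fin n × Bool,
      Continuous (fun w => pd l Φ w * Real.exp (-Φ w)) :=
    fun l => (hp_cont l).mul hE_cont
  have hg_fderiv : ∀ (l : Fin n × Bool) (z : Cn n),
      fderiv ℝ (fun w => pd l Φ w * Real.exp (-Φ w)) z (dir l)
        = Real.exp (-Φ z) * pd l (pd l Φ) z - (pd l Φ z)^2 * Real.exp (-Φ z) := by
    intro l z
    have h1 : HasFDerivAt (pd l Φ) (fderiv ℝ (pd l Φ) z) z := (hp_diff l z).hasFDerivAt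
    have h2 := hasFDerivAt_exp_neg hΦ z
    rw [HasFDerivAt.fderiv (f := fun w => pd l Φ w * Real.exp (-Φ w)) (h1.mul h2)]
    simp only [ContinuousLinearMap.add_apply, ContinuousLinearMap.coe_smul',
      Pi.smul_apply, ContinuousLinearMap.neg_apply, smul_eq_mul]
    show pd l Φ z * (Real.exp (-Φ z) * -(pd l Φ z)) + Real.exp (-Φ z) * pd l (pd l Φ) z = _
    ring
  have hg_fderiv_cont : ∀ l : Fin n × Bool,
      Continuous (fun z => fderiv ℝ (fun w => pd l Φ w * Real.exp (-Φ w)) z (dir l)) := by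
    intro l
    have : (fun z => fderiv ℝ (fun w => pd l Φ w * Real.exp (-Φ w)) z (dir l))
        = fun z => Real.exp (-Φ z) * pd l (pd l Φ) z - (pd l Φ z)^2 * Real.exp (-Φ z) := by
      funext z; exact hg_fderiv l z
    rw [this]
    exact (hE_cont.mul (hpp_cont l)).sub (((hp_cont l).pow 2).mul hE_cont)
  -- vanishing off tsupport f
  have hf0 : ∀ z ∉ tsupport f, f z = 0 := fun z hz => image_eq_zero_of_notMem_tsupport hz
  have hpdf0 : ∀ (l : Fin n × Bool) (z : Cn n), z ∉ tsupport f → pd l f z = 0 :=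
    fun l z hz => pd_zero_of_nmem l hz
  have hu0 : ∀ z ∉ tsupport f, ‖f z‖^2 = 0 := fun z hz => by rw [hf0 z hz]; simp
  have hpdu0 : ∀ (l : Fin n × Bool) (z : Cn n), z ∉ tsupport f
      → pd l (fun w => ‖f w‖^2) z = 0 := by
    intro l z hz
    rw [pd_normSq l hf z, hpdf0 l z hz]
    simp
  -- integrability helper
  have integ : ∀ g : Cn n → ℝ, Continuous g → (∀ z ∉ tsupport f, g z = 0) → Integrable g :=
    fun g hc hv => hc.integrable_of_hasCompactSupport (HasCompactSupport.intro hsupp hv)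
  have intA : ∀ l : Fin n × Bool,
      Integrable (fun z => ‖pd l f z‖^2 * Real.exp (-Φ z)) := by
    intro l
    exact integ _ (((hpdf_cont l).norm.pow 2).mul hE_cont)
      (fun z hz => by rw [hpdf0 l z hz]; simp)
  have intB : ∀ l : Fin n × Bool,
      Integrable (fun z => ‖pd l f z - Complex.ofReal (pd l Φ z) * f z‖^2
        * Real.exp (-Φ z)) := by
    intro l
    refine integ _ ((((hpdf_cont l).sub (((Complex.continuous_ofReal.comp (hp_cont l)).mul
      hf.continuous))).norm.pow 2).mul hE_cont) (fun z hz => ?_)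
    rw [hpdf0 l z hz, hf0 z hz]
    simp
  have intC : ∀ l : Fin n × Bool,
      Integrable (fun z => (pd l Φ z)^2 * ‖f z‖^2 * Real.exp (-Φ z)) := by
    intro l
    exact integ _ ((((hp_cont l).pow 2).mul hu_cont).mul hE_cont)
      (fun z hz => by rw [hu0 z hz]; simp)
  have intD : ∀ l : Fin n × Bool,
      Integrable (fun z => (pd l Φ z * Real.exp (-Φ z)) * pd l (fun w => ‖f w‖^2) z) := by
    intro l
    exact integ _ ((hg_cont l).mul (hpdu_cont l))
      (fun z hz => by rw [hpdu0 l z hz]; simp)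
  have intG : ∀ l : Fin n × Bool,
      Integrable (fun z => fderiv ℝ (fun w => pd l Φ w * Real.exp (-Φ w)) z (dir l)
        * ‖f z‖^2) := by
    intro l
    exact integ _ ((hg_fderiv_cont l).mul hu_cont)
      (fun z hz => by rw [hu0 z hz]; simp)
  have intGU : ∀ l : Fin n × Bool,
      Integrable (fun z => (pd l Φ z * Real.exp (-Φ z)) * ‖f z‖^2) := by
    intro l
    exact integ _ ((hg_cont l).mul hu_cont)
      (fun z hz => by rw [hu0 z hz]; simp)
  have intH : ∀ l : Fin n × Bool,
      Integrable (fun z => ‖f z‖^2 * pd l (pd l Φ) z * Real.exp (-Φ z)) := by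
    intro l
    exact integ _ ((hu_cont.mul (hpp_cont l)).mul hE_cont)
      (fun z hz => by rw [hu0 z hz]; simp)
  -- integration by parts
  have ibp : ∀ l : Fin n × Bool,
      (∫ z, (pd l Φ z * Real.exp (-Φ z)) * pd l (fun w => ‖f w‖^2) z)
        = - ∫ z, fderiv ℝ (fun w => pd l Φ w * Real.exp (-Φ w)) z (dir l) * ‖f z‖^2 := by
    intro l
    have := integral_mul_fderiv_eq_neg_fderiv_mul_of_integrable (μ := volume)
      (f := fun w => pd l Φ w * Real.exp (-Φ w)) (g := fun w => ‖f w‖^2) (v := dir l)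
      (intG l) ?_ (intGU l) (fun x _ => hg_diff l x) (fun x _ => hu_diff x)
    · exact this
    · exact (intD l)
  -- per-direction identity
  have step : ∀ l : Fin n × Bool,
      (∫ z, ‖pd l f z - Complex.ofReal (pd l Φ z) * f z‖^2 * Real.exp (-Φ z))
        = (∫ z, ‖pd l f z‖^2 * Real.exp (-Φ z))
          + ∫ z, ‖f z‖^2 * pd l (pd l Φ) z * Real.exp (-Φ z) := by
    intro l
    have ptw : (fun z => ‖pd l f z - Complex.ofReal (pd l Φ z) * f z‖^2 * Real.exp (-Φ z))
        = fun z => ‖pd l f z‖^2 * Real.exp (-Φ z)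
          + ((pd l Φ z)^2 * ‖f z‖^2 * Real.exp (-Φ z)
            - (pd l (fun w => ‖f w‖^2) z) * (pd l Φ z * Real.exp (-Φ z))) := by
      funext z
      exact ptwise_aux (pd l f z) (f z) (pd l Φ z) (Real.exp (-Φ z))
        (pd l (fun w => ‖f w‖^2) z) (pd_normSq l hf z)
    rw [ptw]
    have intCD : Integrable (fun z => (pd l Φ z)^2 * ‖f z‖^2 * Real.exp (-Φ z)
        - (pd l (fun w => ‖f w‖^2) z) * (pd l Φ z * Real.exp (-Φ z))) :=
      integ _ (((((hp_cont l).pow 2).mul hu_cont).mul hE_cont).sub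
        ((hpdu_cont l).mul ((hp_cont l).mul hE_cont)))
        (fun z hz => by rw [hu0 z hz, hpdu0 l z hz]; simp)
    rw [integral_add (intA l) intCD]
    congr 1
    have e1 : (fun z => (pd l Φ z)^2 * ‖f z‖^2 * Real.exp (-Φ z)
        - (pd l (fun w => ‖f w‖^2) z) * (pd l Φ z * Real.exp (-Φ z)))
        = fun z => (pd l Φ z)^2 * ‖f z‖^2 * Real.exp (-Φ z)
          - (pd l Φ z * Real.exp (-Φ z)) * pd l (fun w => ‖f w‖^2) z := by
      funext z; ring
    rw [e1, integral_sub (intC l) (intD l), ibp l, sub_neg_eq_add,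
      ← integral_add (intC l) (intG l)]
    congr 1
    funext z
    rw [hg_fderiv l z]
    ring
  -- sum up
  rw [Finset.sum_congr rfl (fun l _ => step l), Finset.sum_add_distrib]
  have hsum : (∑ l : Fin n × Bool, ∫ z, ‖f z‖^2 * pd l (pd l Φ) z * Real.exp (-Φ z))
      = ∫ z, ‖f z‖^2 * lap Φ z * Real.exp (-Φ z) := by
    rw [← integral_finset_sum _ (fun l _ => intH l)]
    congr 1
    funext z
    simp only [lap, Finset.mul_sum, Finset.sum_mul]
  rw [hsum]
  have : 0 ≤ ∫ z, ‖f z‖^2 * lap Φ z * Real.exp (-Φ z) :=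
    integral_nonneg fun z => mul_nonneg (hlap z) (Real.exp_pos _).le
  linarith

end Stmt1Aux

open Stmt1Aux

/-- for a plurisubharmonic C² weight,
`Σ_l ∫ |∂_l f|² e^{−φ} ≤ Σ_l ∫ |∂_l f − (∂_l φ) f|² e^{−φ}`, and consequently the same
inequality with `‖f‖²_φ` added to both sides. -/
theorem stmt1 {n : ℕ} (Ω : Set (Cn n)) (hΩ : IsOpen Ω)
    (φ : Cn n → ℝ) (hφ : ContDiffOn ℝ 2 φ Ω)
    (hpsh : ∀ z ∈ Ω, ∀ t : Cn n, 0 ≤ levi φ z t)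
    (f : Cn n → ℂ) (hf : SmoothCompSupp Ω f) :
    (∑ l : Fin n × Bool, ∫ z in Ω, ‖pd l f z‖^2 * Real.exp (-φ z))
      ≤ (∑ l : Fin n × Bool,
          ∫ z in Ω, ‖pd l f z - Complex.ofReal (pd l φ z) * f z‖^2 * Real.exp (-φ z)) ∧
    (∫ z in Ω, ‖f z‖^2 * Real.exp (-φ z))
        + (∑ l : Fin n × Bool, ∫ z in Ω, ‖pd l f z‖^2 * Real.exp (-φ z))
      ≤ (∫ z in Ω, ‖f z‖^2 * Real.exp (-φ z))
        + (∑ l : Fin n × Bool,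
            ∫ z in Ω, ‖pd l f z - Complex.ofReal (pd l φ z) * f z‖^2 * Real.exp (-φ z)) := by

  classical
  obtain ⟨hf_cd, hf_cs, hf_sub⟩ := hf
  -- a compact set L with tsupport f ⊆ interior L, L ⊆ Ω
  obtain ⟨L, hLc, hKL, hLΩ⟩ := exists_compact_between hf_cs hΩ hf_sub
  -- bump function ψ
  obtain ⟨ψ, h0, h1, -⟩ := exists_contMDiffMap_zero_one_nhds_of_isClosed (𝓘(ℝ, Cn n)) (n := (⊤ : ℕ∞))
    (isOpen_interior (s := L)).isClosed_compl (isClosed_tsupport f)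
    (by rw [Set.disjoint_compl_left_iff_subset]; exact hKL)
  have hψ : ContDiff ℝ (⊤ : ℕ∞) (ψ : Cn n → ℝ) := contMDiff_iff_contDiff.mp ψ.contMDiff
  -- an open set V ⊇ tsupport f on which ψ = 1
  obtain ⟨V, hVopen, hKV, hV1⟩ := (eventually_nhdsSet_iff_exists).mp h1
  -- ψ vanishes outside interior L
  have hψ0 : ∀ x ∉ interior L, ψ x = 0 := fun x hx => h0.self_of_nhdsSet x hx
  -- the global weight Φ := ψ * φ
  set Φ : Cn n → ℝ := fun z => ψ z * φ z with hΦdef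
  have hΦ : ContDiff ℝ 2 Φ := by
    rw [contDiff_iff_contDiffAt]
    intro z
    by_cases hz : z ∈ Ω
    · exact ((hψ.of_le (by rw [show ((2:WithTop ℕ∞)) = (((2:ℕ∞)):WithTop ℕ∞) from rfl]; exact WithTop.coe_le_coe.mpr le_top)).contDiffAt).mul
        (hφ.contDiffAt (hΩ.mem_nhds hz))
    · have hsupp : Function.support (ψ : Cn n → ℝ) ⊆ interior L := fun x hx => by
        by_contra h
        exact hx (hψ0 x h)
      have hz' : z ∉ tsupport (ψ : Cn n → ℝ) := fun hmem => by
        have hsub : tsupport (ψ : Cn n → ℝ) ⊆ L :=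
          (closure_mono hsupp).trans (closure_minimal interior_subset hLc.isClosed)
        exact hz (hLΩ (hsub hmem))
      have hev : (Φ : Cn n → ℝ) =ᶠ[nhds z] fun _ => (0:ℝ) := by
        filter_upwards [notMem_tsupport_iff_eventuallyEq.mp hz'] with w hw
        have : ψ w = 0 := hw
        simp [hΦdef, this]
      exact (contDiffAt_const (c := (0:ℝ))).congr_of_eventuallyEq hev
  -- Φ = φ near every point of V
  have hEqV : ∀ z ∈ V, Φ =ᶠ[nhds z] φ := by
    intro z hz
    filter_upwards [hVopen.mem_nhds hz] with w hw
    simp [hΦdef, hV1 w hw]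
  -- first derivatives agree on V
  have hpdV : ∀ (l : Fin n × Bool), ∀ z ∈ V, pd l Φ z = pd l φ z :=
    fun l z hz => pd_congr l (hEqV z hz)
  -- second derivatives agree on V
  have hppV : ∀ (l : Fin n × Bool), ∀ z ∈ V, pd l (pd l Φ) z = pd l (pd l φ) z := by
    intro l z hz
    apply pd_congr l
    filter_upwards [hVopen.mem_nhds hz] with w hw
    exact hpdV l w hw
  -- positivity of ‖f‖² Δ Φ
  have hlap : ∀ z, 0 ≤ ‖f z‖^2 * lap Φ z := by
    intro z
    by_cases hz : f z = 0
    · simp [hz]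
    · have hzK : z ∈ tsupport f := subset_closure (by simpa [Function.mem_support] using hz)
      have hzV : z ∈ V := hKV hzK
      have hzΩ : z ∈ Ω := hf_sub hzK
      have : lap Φ z = lap φ z := by
        unfold lap
        exact Finset.sum_congr rfl fun l _ => hppV l z hzV
      rw [this]
      exact mul_nonneg (by positivity) (lap_nonneg_of_levi (hpsh z hzΩ))
  -- rewrite the set integrals as global integrals with weight Φ
  have hzero : ∀ z, z ∉ tsupport f → f z = 0 ∧ ∀ l : Fin n × Bool, pd l f z = 0 :=
    fun z hz => ⟨image_eq_zero_of_notMem_tsupport hz, fun l => pd_zero_of_nmem l hz⟩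
  have hrwA : ∀ l : Fin n × Bool,
      (∫ z in Ω, ‖pd l f z‖^2 * Real.exp (-φ z))
        = ∫ z, ‖pd l f z‖^2 * Real.exp (-Φ z) := by
    intro l
    have hpt : ∀ z, ‖pd l f z‖^2 * Real.exp (-φ z) = ‖pd l f z‖^2 * Real.exp (-Φ z) := by
      intro z
      by_cases hz : z ∈ tsupport f
      · rw [(hEqV z (hKV hz)).self_of_nhds]
      · rw [(hzero z hz).2 l]; simp
    rw [show (fun z => ‖pd l f z‖^2 * Real.exp (-φ z))
        = fun z => ‖pd l f z‖^2 * Real.exp (-Φ z) from funext hpt]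
    apply setIntegral_eq_integral_of_forall_compl_eq_zero
    intro z hz
    rw [(hzero z (fun hmem => hz (hf_sub hmem))).2 l]
    simp
  have hrwB : ∀ l : Fin n × Bool,
      (∫ z in Ω, ‖pd l f z - Complex.ofReal (pd l φ z) * f z‖^2 * Real.exp (-φ z))
        = ∫ z, ‖pd l f z - Complex.ofReal (pd l Φ z) * f z‖^2 * Real.exp (-Φ z) := by
    intro l
    have hpt : ∀ z, ‖pd l f z - Complex.ofReal (pd l φ z) * f z‖^2 * Real.exp (-φ z)
        = ‖pd l f z - Complex.ofReal (pd l Φ z) * f z‖^2 * Real.exp (-Φ z) := by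
      intro z
      by_cases hz : z ∈ tsupport f
      · rw [(hEqV z (hKV hz)).self_of_nhds, hpdV l z (hKV hz)]
      · rw [(hzero z hz).1, (hzero z hz).2 l]; simp
    rw [show (fun z => ‖pd l f z - Complex.ofReal (pd l φ z) * f z‖^2 * Real.exp (-φ z))
        = fun z => ‖pd l f z - Complex.ofReal (pd l Φ z) * f z‖^2 * Real.exp (-Φ z)
        from funext hpt]
    apply setIntegral_eq_integral_of_forall_compl_eq_zero
    intro z hz
    rw [(hzero z (fun hmem => hz (hf_sub hmem))).1,
      (hzero z (fun hmem => hz (hf_sub hmem))).2 l]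
    simp
  have main : (∑ l : Fin n × Bool, ∫ z in Ω, ‖pd l f z‖^2 * Real.exp (-φ z))
      ≤ ∑ l : Fin n × Bool,
          ∫ z in Ω, ‖pd l f z - Complex.ofReal (pd l φ z) * f z‖^2 * Real.exp (-φ z) := by
    rw [Finset.sum_congr rfl (fun l _ => hrwA l),
      Finset.sum_congr rfl (fun l _ => hrwB l)]
    exact key Φ hΦ f hf_cd hf_cs hlap
  exact ⟨main, by linarith⟩
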